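/- Let K be a field equipped with a multiplicative nonarchimedean (ultrametric) absolute value ‖·‖. Fix an integer d ≥ 2 with ‖(d : K)‖ = 1 (the image of d in K under the natural ring map ℕ → K has absolute value 1) and λ ∈ K with ‖λ‖ > 1, and let f_λ : K → K be f_λ(z) := z^d + λ. If n ≥ 1 and z ∈ K satisfies f_λ^{∘n}(z) = z, then the derivative of the n-fold iterate at z satisfies ‖(f_λ^{∘n})'(z)‖ = ‖λ‖^{n(d−1)/d} (real exponentiation), where (f_λ^{∘n})'(z) = ∏_{j=0}^{n−1} d·(f_λ^{∘j}(z))^{d−1} by the chain rule. -/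

import Mathlib

/-- Multiplier of a periodic point: if `f_λ(z) = z^d + λ` with `d ≥ 2`, `‖(d:K)‖ = 1`,
`‖λ‖ > 1` over a nonarchimedean normed field, and `f_λ^{∘n}(z) = z` with `n ≥ 1`, then
`‖(f_λ^{∘n})'(z)‖ = ‖λ‖^{n(d−1)/d}`, where by the chain rule
`(f_λ^{∘n})'(z) = ∏_{j=0}^{n−1} d·(f_λ^{∘j}(z))^{d−1}`. -/
theorem norm_multiplier_periodic_point {K : Type*} [NormedField K]
    (hultra : ∀ x y : K, ‖x + y‖ ≤ max ‖x‖ ‖y‖)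
    (d : ℕ) (hd : 2 ≤ d) (hdnorm : ‖(d : K)‖ = 1)
    (lam : K) (hlam : 1 < ‖lam‖)
    (n : ℕ) (hn : 1 ≤ n) (z : K) (hz : (fun w : K => w ^ d + lam)^[n] z = z) :
    ‖∏ j ∈ Finset.range n, ((d : K) * ((fun w : K => w ^ d + lam)^[j] z) ^ (d - 1))‖
      = ‖lam‖ ^ ((n : ℝ) * ((d : ℝ) - 1) / d) := by
  set f : K → K := fun w => w ^ d + lam with hf
  have hdR : (0:ℝ) < d := by exact_mod_cast (by omega : 0 < d)
  have hlam0 : (0:ℝ) < ‖lam‖ := lt_trans one_pos hlam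
  set r : ℝ := ‖lam‖ ^ ((d:ℝ)⁻¹) with hr
  have hr1 : 1 < r := by
    rw [hr]
    exact (Real.one_lt_rpow_iff_of_pos hlam0).mpr (Or.inl ⟨hlam, by positivity⟩)
  have hrd : r ^ d = ‖lam‖ := by
    rw [hr, ← Real.rpow_natCast (‖lam‖ ^ ((d:ℝ)⁻¹)) d, ← Real.rpow_mul hlam0.le,
      inv_mul_cancel₀ (ne_of_gt hdR), Real.rpow_one]
  have key : ∀ x y : K, ‖y‖ < ‖x‖ → ‖x + y‖ = ‖x‖ := by
    intro x y h
    apply le_antisymm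
    · exact (hultra x y).trans (max_le le_rfl h.le)
    · have h2 : ‖x‖ ≤ max ‖x + y‖ ‖y‖ := by
        simpa using hultra (x + y) (-y)
      rcases le_max_iff.mp h2 with h3 | h3
      · exact h3
      · exact absurd h3 (not_le_of_gt h)
  have hfw : ∀ w : K, r < ‖w‖ → ‖f w‖ = ‖w‖ ^ d := by
    intro w hw
    have h1 : ‖lam‖ < ‖w ^ d‖ := by
      rw [norm_pow, ← hrd]
      exact pow_lt_pow_left₀ hw (le_of_lt (lt_trans one_pos hr1)) (by omega)
    show ‖w ^ d + lam‖ = ‖w‖ ^ d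
    rw [key _ _ h1, norm_pow]
  have hgrow : ∀ w : K, r < ‖w‖ → ∀ k, r < ‖f^[k] w‖ ∧ ‖w‖ ≤ ‖f^[k] w‖ := by
    intro w hw k
    induction k with
    | zero => exact ⟨by simpa using hw, by simp⟩
    | succ k ih =>
      obtain ⟨ih1, ih2⟩ := ih
      have h1 : 1 < ‖f^[k] w‖ := lt_trans hr1 ih1
      have hstep : ‖f^[k+1] w‖ = ‖f^[k] w‖ ^ d := by
        rw [Function.iterate_succ_apply', hfw _ ih1]
      have h2 : ‖f^[k] w‖ < ‖f^[k+1] w‖ := by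
        rw [hstep]
        exact lt_self_pow₀ h1 (by omega)
      exact ⟨lt_trans ih1 h2, le_of_lt (lt_of_le_of_lt ih2 h2)⟩
  have hstrict : ∀ w : K, r < ‖w‖ → ∀ k, ‖w‖ < ‖f^[k+1] w‖ := by
    intro w hw k
    obtain ⟨h1, h2⟩ := hgrow w hw k
    have hstep : ‖f^[k+1] w‖ = ‖f^[k] w‖ ^ d := by
      rw [Function.iterate_succ_apply', hfw _ h1]
    have : ‖f^[k] w‖ < ‖f^[k+1] w‖ := by
      rw [hstep]
      exact lt_self_pow₀ (lt_trans hr1 h1) (by omega)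
    exact lt_of_le_of_lt h2 this
  have hper : ∀ w : K, f^[n] w = w → ‖w‖ = r := by
    intro w hw
    rcases lt_trichotomy ‖w‖ r with h | h | h
    · have h1 : ‖w ^ d‖ < ‖lam‖ := by
        rw [norm_pow, ← hrd]
        exact pow_lt_pow_left₀ h (norm_nonneg w) (by omega)
      have h2 : ‖f w‖ = ‖lam‖ := by
        show ‖w ^ d + lam‖ = ‖lam‖
        rw [add_comm]
        exact key _ _ h1
      have h3 : r < ‖f w‖ := by
        rw [h2, ← hrd]
        calc r = r ^ 1 := (pow_one r).symm
          _ < r ^ d := pow_lt_pow_right₀ hr1 (by omega)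
      have h4 : f^[n] (f w) = f w := by
        rw [← Function.iterate_succ_apply, Function.iterate_succ_apply', hw]
      have h5 := hstrict (f w) h3 (n - 1)
      rw [Nat.sub_add_cancel hn, h4] at h5
      exact absurd h5 (lt_irrefl _)
    · exact h
    · have h5 := hstrict w h (n - 1)
      rw [Nat.sub_add_cancel hn, hw] at h5
      exact absurd h5 (lt_irrefl _)
  have horb : ∀ j, ‖f^[j] z‖ = r := by
    intro j
    apply hper
    calc f^[n] (f^[j] z) = f^[n + j] z := (Function.iterate_add_apply f n j z).symm
      _ = f^[j] (f^[n] z) := by rw [Nat.add_comm, Function.iterate_add_apply]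
      _ = f^[j] z := by rw [hz]
  rw [norm_prod]
  have hterm : ∀ j ∈ Finset.range n, ‖(d : K) * (f^[j] z) ^ (d - 1)‖ = r ^ (d - 1) := by
    intro j _
    rw [norm_mul, norm_pow, horb, hdnorm, one_mul]
  rw [Finset.prod_congr rfl hterm, Finset.prod_const, Finset.card_range, hr,
    ← Real.rpow_natCast (‖lam‖ ^ ((d:ℝ)⁻¹)) (d - 1), ← Real.rpow_mul hlam0.le,
    ← Real.rpow_natCast (‖lam‖ ^ ((d:ℝ)⁻¹ * (d - 1 : ℕ))) n, ← Real.rpow_mul hlam0.le]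
  congr 1
  rw [Nat.cast_sub (by omega : 1 ≤ d)]
  push_cast
  field_simp
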